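/- Let G = (V_Id ⊔ V_T, E) be a finite connected bipartite multigraph where every vertex in V_Id has even degree and every edge joins V_Id to V_T. Remove all vertices of a designated subset V_W ⊆ V_T of degree-2 vertices together with their incident edges, duplicate the remaining graph into two disjoint copies, and then merge each vertex of V_Id designated 'bad' with its copy (keeping 'good' vertices distinct). If the original graph minus V_W has N_b components containing a bad vertex and N_g components containing only good vertices, then the resulting graph has exactly N_b + 2·N_g connected components, provided every component contains at least one vertex of V_Id. -/
import Mathlib

section AuxDup

variable {V : Type*} (r : V → V → Prop) (Bad : Set V)

/-- The duplicated-and-merged adjacency relation. -/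
def AuxDup.r' : V × Bool → V × Bool → Prop := fun p q =>
  (r p.1 q.1 ∧ p.2 = q.2) ∨ (p.1 = q.1 ∧ p.1 ∈ Bad)

lemma AuxDup.key {p q : V × Bool} (h : Relation.EqvGen (AuxDup.r' r Bad) p q) :
    Relation.EqvGen r p.1 q.1 ∧
      ((∃ u ∈ Bad, Relation.EqvGen r u p.1) ∨ p.2 = q.2) := by
  induction h with
  | rel p q hpq =>
    rcases hpq with ⟨hr, hb⟩ | ⟨he, hB⟩
    · exact ⟨Relation.EqvGen.rel _ _ hr, Or.inr hb⟩
    · exact ⟨he ▸ Relation.EqvGen.refl _,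
        Or.inl ⟨p.1, hB, Relation.EqvGen.refl _⟩⟩
  | refl p => exact ⟨Relation.EqvGen.refl _, Or.inr rfl⟩
  | symm p q h ih =>
    refine ⟨Relation.EqvGen.symm _ _ ih.1, ?_⟩
    rcases ih.2 with ⟨u, hu, hup⟩ | he
    · exact Or.inl ⟨u, hu, Relation.EqvGen.trans _ _ _ hup ih.1⟩
    · exact Or.inr he.symm
  | trans p q s h1 h2 ih1 ih2 =>
    refine ⟨Relation.EqvGen.trans _ _ _ ih1.1 ih2.1, ?_⟩
    rcases ih1.2 with h | he1
    · exact Or.inl h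
    · rcases ih2.2 with ⟨u, hu, huq⟩ | he2
      · exact Or.inl ⟨u, hu, Relation.EqvGen.trans _ _ _ huq
          (Relation.EqvGen.symm _ _ ih1.1)⟩
      · exact Or.inr (he1.trans he2)

lemma AuxDup.lift {v w : V} (h : Relation.EqvGen r v w) (b : Bool) :
    Relation.EqvGen (AuxDup.r' r Bad) (v, b) (w, b) := by
  induction h with
  | rel x y hxy => exact Relation.EqvGen.rel _ _ (Or.inl ⟨hxy, rfl⟩)
  | refl x => exact Relation.EqvGen.refl _
  | symm x y h ih => exact Relation.EqvGen.symm _ _ ih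
  | trans x y z h1 h2 ih1 ih2 => exact Relation.EqvGen.trans _ _ _ ih1 ih2

lemma AuxDup.merge {v : V} (b c : Bool) (h : ∃ u ∈ Bad, Relation.EqvGen r u v) :
    Relation.EqvGen (AuxDup.r' r Bad) (v, b) (v, c) := by
  obtain ⟨u, hu, huv⟩ := h
  refine Relation.EqvGen.trans _ _ _
    (AuxDup.lift r Bad (Relation.EqvGen.symm _ _ huv) b)
    (Relation.EqvGen.trans _ _ _ ?_ (AuxDup.lift r Bad huv c))
  exact Relation.EqvGen.rel _ _ (Or.inr ⟨rfl, hu⟩)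

end AuxDup

/-- let a finite graph have vertex set `V` (with adjacency
relation `r`), whose vertices are split into `VId` and its complement, and with
a set `Bad ⊆ VId` of "bad" vertices of `VId` (the others being "good").
Duplicate the graph into two disjoint copies `V × Bool` and merge each bad
vertex with its copy (modelled by joining `(v, false)` and `(v, true)` for
`v ∈ Bad`).  If every connected component of the original graph contains a
vertex of `VId`, and the original graph has `N_b` components containing a bad
vertex and `N_g` components containing none, then the resulting graph has
exactly `N_b + 2 N_g` connected components.  Connected components are the
equivalence classes of the equivalence relation generated by adjacency. -/
theorem duplicate_merge_component_count
    {V : Type*} [Finite V] (r : V → V → Prop) (hsymm : Symmetric r)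
    (VId : Set V) (Bad : Set V) (hBad : Bad ⊆ VId)
    (hIdcover : ∀ c : Quotient (Relation.EqvGen.setoid r), ∃ v ∈ VId,
      (Quotient.mk (Relation.EqvGen.setoid r) v) = c) :
    let r' : V × Bool → V × Bool → Prop := fun p q =>
      (r p.1 q.1 ∧ p.2 = q.2) ∨ (p.1 = q.1 ∧ p.1 ∈ Bad)
    Nat.card (Quotient (Relation.EqvGen.setoid r')) =
      Nat.card {c : Quotient (Relation.EqvGen.setoid r) //
          ∃ v ∈ Bad, (Quotient.mk (Relation.EqvGen.setoid r) v) = c} +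
        2 * Nat.card {c : Quotient (Relation.EqvGen.setoid r) //
          ¬ ∃ v ∈ Bad, (Quotient.mk (Relation.EqvGen.setoid r) v) = c} := by
  classical
  intro r'
  have hrr' : r' = AuxDup.r' r Bad := rfl
  set S := Quotient (Relation.EqvGen.setoid r) with hS
  set P : S → Prop := fun c => ∃ v ∈ Bad, Quotient.mk (Relation.EqvGen.setoid r) v = c
    with hP
  -- relating membership of bad component with P
  have hPmk : ∀ v : V, P (Quotient.mk (Relation.EqvGen.setoid r) v) ↔
      ∃ u ∈ Bad, Relation.EqvGen r u v := by
    intro v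
    constructor
    · rintro ⟨u, hu, he⟩
      exact ⟨u, hu, Quotient.exact he⟩
    · rintro ⟨u, hu, he⟩
      exact ⟨u, hu, Quotient.sound he⟩
  -- well-definedness of forward map
  have wdF : ∀ p q : V × Bool, Relation.EqvGen (AuxDup.r' r Bad) p q →
      (if h : P (Quotient.mk (Relation.EqvGen.setoid r) p.1) then
        (Sum.inl ⟨_, h⟩ : {c : S // P c} ⊕ ({c : S // ¬ P c} × Bool))
      else Sum.inr (⟨_, h⟩, p.2)) =
      (if h : P (Quotient.mk (Relation.EqvGen.setoid r) q.1) then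
        (Sum.inl ⟨_, h⟩ : {c : S // P c} ⊕ ({c : S // ¬ P c} × Bool))
      else Sum.inr (⟨_, h⟩, q.2)) := by
    intro p q h
    obtain ⟨h1, h2⟩ := AuxDup.key r Bad h
    have hmk : Quotient.mk (Relation.EqvGen.setoid r) p.1 =
        Quotient.mk (Relation.EqvGen.setoid r) q.1 := Quotient.sound h1
    by_cases hp : P (Quotient.mk (Relation.EqvGen.setoid r) p.1)
    · have hq : P (Quotient.mk (Relation.EqvGen.setoid r) q.1) := hmk ▸ hp
      rw [dif_pos hp, dif_pos hq]
      exact congrArg Sum.inl (Subtype.ext hmk)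
    · have hq : ¬ P (Quotient.mk (Relation.EqvGen.setoid r) q.1) := fun h' =>
        hp (hmk ▸ h')
      have hb : p.2 = q.2 := by
        rcases h2 with hbad | he
        · exact absurd ((hPmk p.1).2 hbad) hp
        · exact he
      rw [dif_neg hp, dif_neg hq]
      exact congrArg Sum.inr (Prod.ext (Subtype.ext hmk) hb)
  -- well-definedness of backward map pieces
  have wdG : ∀ (b : Bool) (v w : V), Relation.EqvGen r v w →
      Quotient.mk (Relation.EqvGen.setoid (AuxDup.r' r Bad)) (v, b) =
      Quotient.mk (Relation.EqvGen.setoid (AuxDup.r' r Bad)) (w, b) := by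
    intro b v w h
    exact Quotient.sound (AuxDup.lift r Bad h b)
  let e : Quotient (Relation.EqvGen.setoid (AuxDup.r' r Bad)) ≃
      ({c : S // P c} ⊕ ({c : S // ¬ P c} × Bool)) :=
    { toFun := Quotient.lift (fun p : V × Bool =>
        if h : P (Quotient.mk (Relation.EqvGen.setoid r) p.1) then
          (Sum.inl ⟨_, h⟩ : {c : S // P c} ⊕ ({c : S // ¬ P c} × Bool))
        else Sum.inr (⟨_, h⟩, p.2)) wdF
      invFun := fun x => match x with
        | Sum.inl ⟨c, _⟩ => Quotient.lift
            (fun v => Quotient.mk (Relation.EqvGen.setoid (AuxDup.r' r Bad)) (v, false))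
            (wdG false) c
        | Sum.inr (⟨c, _⟩, b) => Quotient.lift
            (fun v => Quotient.mk (Relation.EqvGen.setoid (AuxDup.r' r Bad)) (v, b))
            (wdG b) c
      left_inv := by
        refine Quotient.ind ?_
        rintro ⟨v, b⟩
        by_cases hp : P (Quotient.mk (Relation.EqvGen.setoid r) v)
        · simp only [Quotient.lift_mk, dif_pos hp]
          exact Quotient.sound (AuxDup.merge r Bad false b ((hPmk v).1 hp))
        · simp only [Quotient.lift_mk, dif_neg hp]
      right_inv := by
        rintro (⟨c, h⟩ | ⟨⟨c, h⟩, b⟩) <;>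
          obtain ⟨v, rfl⟩ := Quotient.exists_rep c
        · simp only [Quotient.lift_mk, dif_pos h]
        · simp only [Quotient.lift_mk, dif_neg h] }
  rw [hrr']
  rw [Nat.card_congr e, Nat.card_sum, Nat.card_prod]
  have hbool : Nat.card Bool = 2 := by simp [Nat.card_eq_fintype_card]
  rw [hbool]
  ring
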